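/- Combining the Lipschitz bounds: if R is c-Lipschitz and particles are updated for L steps of SVGD with step size ε, Gaussian kernel bandwidth σ, and temperature α, then MMD²(π⁰_N, π^L_N) ≤ (2εL/(σ√e))·(c/α + 1/(σ√e)). -/

import Mathlib

open Real


/-- Scalar calculus bound: `(t/σ²)·exp(-t²/(2σ²)) ≤ 1/(σ√e)` for `t ≥ 0`. -/
lemma vgf_lemA (σ : ℝ) (hσ : 0 < σ) (t : ℝ) (ht : 0 ≤ t) :
    t / σ ^ 2 * Real.exp (-t ^ 2 / (2 * σ ^ 2)) ≤ 1 / (σ * Real.sqrt (Real.exp 1)) := by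
  have hs : Real.sqrt (Real.exp 1) = Real.exp (1 / 2) := (Real.exp_half 1).symm
  have key : t * Real.exp (-t ^ 2 / (2 * σ ^ 2)) ≤ σ * Real.exp (-(1 / 2)) := by
    rcases eq_or_lt_of_le ht with h | h
    · simp only [← h, zero_mul]
      positivity
    · have hs0 : 0 < t / σ := div_pos h hσ
      have h1 : Real.log (t / σ) ≤ (t / σ) ^ 2 / 2 - 1 / 2 := by
        have h2 := Real.log_le_sub_one_of_pos hs0
        nlinarith [sq_nonneg (t / σ - 1)]
      rw [Real.log_div (ne_of_gt h) (ne_of_gt hσ)] at h1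
      have h3 : (t / σ) ^ 2 / 2 = t ^ 2 / (2 * σ ^ 2) := by
        field_simp
      rw [h3] at h1
      calc t * Real.exp (-t ^ 2 / (2 * σ ^ 2))
          = Real.exp (Real.log t + -t ^ 2 / (2 * σ ^ 2)) := by
            rw [Real.exp_add, Real.exp_log h]
        _ ≤ Real.exp (Real.log σ + -(1 / 2)) := by
            apply Real.exp_le_exp.2
            rw [neg_div]; linarith
        _ = σ * Real.exp (-(1 / 2)) := by rw [Real.exp_add, Real.exp_log hσ]
  have heq : 1 / (σ * Real.sqrt (Real.exp 1)) = σ * Real.exp (-(1 / 2)) / σ ^ 2 := by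
    rw [hs, Real.exp_neg]
    have h4 : Real.exp (1 / 2) > 0 := Real.exp_pos _
    field_simp
  rw [heq, div_mul_eq_mul_div]
  exact (div_le_div_iff_of_pos_right (by positivity)).2 key


/-- 1-D Lipschitz bound for the Gaussian profile. -/
lemma vgf_glip (σ : ℝ) (hσ : 0 < σ) (r s : ℝ) :
    |Real.exp (-r ^ 2 / (2 * σ ^ 2)) - Real.exp (-s ^ 2 / (2 * σ ^ 2))|
      ≤ 1 / (σ * Real.sqrt (Real.exp 1)) * |r - s| := by
  have hderiv : ∀ x : ℝ, HasDerivAt (fun y => Real.exp (-y ^ 2 / (2 * σ ^ 2)))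
      (Real.exp (-x ^ 2 / (2 * σ ^ 2)) * (-(2 * x) / (2 * σ ^ 2))) x := by
    intro x
    have h0 : HasDerivAt (fun y : ℝ => y ^ 2) (2 * x) x := by
      simpa using hasDerivAt_pow 2 x
    have h1 : HasDerivAt (fun y : ℝ => -y ^ 2 / (2 * σ ^ 2)) (-(2 * x) / (2 * σ ^ 2)) x := by
      have := (h0.neg).div_const (2 * σ ^ 2)
      simpa [neg_div] using this
    exact h1.exp
  have bound : ∀ x : ℝ, ‖deriv (fun y => Real.exp (-y ^ 2 / (2 * σ ^ 2))) x‖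
      ≤ 1 / (σ * Real.sqrt (Real.exp 1)) := by
    intro x
    rw [(hderiv x).deriv, Real.norm_eq_abs, abs_mul,
      abs_of_pos (Real.exp_pos _)]
    have h2 : |(-(2 * x) / (2 * σ ^ 2))| = |x| / σ ^ 2 := by
      rw [abs_div, abs_neg, abs_mul, abs_two, abs_of_pos (show (0:ℝ) < 2 * σ ^ 2 by positivity),
        mul_div_mul_left _ _ (two_ne_zero)]
    rw [h2]
    have h3 : Real.exp (-x ^ 2 / (2 * σ ^ 2)) * (|x| / σ ^ 2)
        = |x| / σ ^ 2 * Real.exp (-|x| ^ 2 / (2 * σ ^ 2)) := by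
      rw [sq_abs]; ring
    rw [h3]
    exact vgf_lemA σ hσ |x| (abs_nonneg x)
  have hmvt := Convex.norm_image_sub_le_of_norm_deriv_le
    (f := fun y => Real.exp (-y ^ 2 / (2 * σ ^ 2))) (s := Set.univ)
    (fun x _ => (hderiv x).differentiableAt)
    (fun x _ => bound x) convex_univ (Set.mem_univ s) (Set.mem_univ r)
  simpa [Real.norm_eq_abs] using hmvt

/-- Gradient norm bound for the Gaussian kernel in its first argument. -/
lemma vgf_gradnorm (d : ℕ) (σ : ℝ) (hσ : 0 < σ) (v w : EuclideanSpace ℝ (Fin d)) :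
    ‖gradient (fun u => Real.exp (-‖u - v‖ ^ 2 / (2 * σ ^ 2))) w‖
      ≤ 1 / (σ * Real.sqrt (Real.exp 1)) := by
  have hfun : (fun u : EuclideanSpace ℝ (Fin d) => Real.exp (-‖u - v‖ ^ 2 / (2 * σ ^ 2)))
      = fun u : EuclideanSpace ℝ (Fin d) => Real.exp (-(2 * σ ^ 2)⁻¹ * ‖u - v‖ ^ 2) := by
    funext u; congr 1; ring
  rw [hfun]
  have h1 : HasFDerivAt (fun u : EuclideanSpace ℝ (Fin d) => u - v) (ContinuousLinearMap.id ℝ (EuclideanSpace ℝ (Fin d))) w :=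
    (hasFDerivAt_id w).sub_const v
  have h2 : HasFDerivAt (fun u : EuclideanSpace ℝ (Fin d) => ‖u - v‖ ^ 2)
      (2 • (innerSL ℝ (w - v)).comp (ContinuousLinearMap.id ℝ (EuclideanSpace ℝ (Fin d)))) w := h1.norm_sq
  have h3 := h2.const_mul (-(2 * σ ^ 2)⁻¹)
  have h4 := h3.exp
  simp only [gradient]
  rw [LinearIsometryEquiv.norm_map, h4.fderiv]
  apply ContinuousLinearMap.opNorm_le_bound _ (by positivity)
  intro y
  have hval : (Real.exp (-(2 * σ ^ 2)⁻¹ * ‖w - v‖ ^ 2) •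
      ((-(2 * σ ^ 2)⁻¹) • (2 • (innerSL ℝ (w - v)).comp (ContinuousLinearMap.id ℝ (EuclideanSpace ℝ (Fin d)))))) y
      = Real.exp (-(2 * σ ^ 2)⁻¹ * ‖w - v‖ ^ 2) *
        ((-(2 * σ ^ 2)⁻¹) * (2 * (inner ℝ (w - v) y : ℝ))) := by
    simp [innerSL_apply_apply, two_smul]
    simp [sub_mul, Finset.sum_sub_distrib, inner_sub_left]
    ring
  rw [hval, Real.norm_eq_abs, abs_mul, abs_of_pos (Real.exp_pos _), abs_mul]
  have habs2 : |(-(2 * σ ^ 2)⁻¹)| = (2 * σ ^ 2)⁻¹ := by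
    rw [abs_neg, abs_of_pos]; positivity
  rw [habs2, abs_mul]
  have h2' : |(2 : ℝ)| = 2 := by norm_num
  rw [h2']
  have hinner : |(inner ℝ (w - v) y : ℝ)| ≤ ‖w - v‖ * ‖y‖ := abs_real_inner_le_norm _ _
  set t := ‖w - v‖
  have harg : -(2 * σ ^ 2)⁻¹ * t ^ 2 = -t ^ 2 / (2 * σ ^ 2) := by ring
  calc Real.exp (-(2 * σ ^ 2)⁻¹ * t ^ 2) * ((2 * σ ^ 2)⁻¹ * (2 * |(inner ℝ (w - v) y : ℝ)|))
      ≤ Real.exp (-(2 * σ ^ 2)⁻¹ * t ^ 2) * ((2 * σ ^ 2)⁻¹ * (2 * (t * ‖y‖))) := by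
        gcongr
    _ = (t / σ ^ 2 * Real.exp (-t ^ 2 / (2 * σ ^ 2))) * ‖y‖ := by
        rw [← harg]; field_simp
    _ ≤ 1 / (σ * Real.sqrt (Real.exp 1)) * ‖y‖ := by
        gcongr
        exact vgf_lemA σ hσ t (norm_nonneg _)

/-- Theorem 1 of the VGF paper: if `R` is `c`-Lipschitz (so `‖∇R‖ ≤ c`) and particles are
updated for `L` steps of SVGD with step size `ε`, Gaussian kernel bandwidth `σ`, and
temperature `α`, then `MMD²(π⁰_N, π^L_N) ≤ (2εL/(σ√e))·(c/α + 1/(σ√e))`. -/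
theorem vgf_mmd_bound (d N : ℕ) (hN : 0 < N) (σ α ε c : ℝ)
    (hσ : 0 < σ) (hα : 0 < α) (hε : 0 < ε) (hc : 0 ≤ c)
    (k : EuclideanSpace ℝ (Fin d) → EuclideanSpace ℝ (Fin d) → ℝ)
    (hk : ∀ u v, k u v = Real.exp (-‖u - v‖ ^ 2 / (2 * σ ^ 2)))
    (R : EuclideanSpace ℝ (Fin d) → ℝ) (hR : Differentiable ℝ R)
    (hRc : ∀ a, ‖gradient R a‖ ≤ c)
    (a : ℕ → Fin N → EuclideanSpace ℝ (Fin d))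
    (hstep : ∀ l i, a (l + 1) i = a l i +
      ε • ((N : ℝ)⁻¹ • ∑ j, ((k (a l j) (a l i) / α) • gradient R (a l j)
        + gradient (fun u => k u (a l i)) (a l j))))
    (L : ℕ) :
    (1 / (N : ℝ) ^ 2) *
        ∑ i, ∑ j, (k (a 0 i) (a 0 j) + k (a L i) (a L j)
          - k (a L i) (a 0 j) - k (a 0 i) (a L j))
      ≤ (2 * ε * L / (σ * Real.sqrt (Real.exp 1)))
          * (c / α + 1 / (σ * Real.sqrt (Real.exp 1))) := by
  set K : ℝ := 1 / (σ * Real.sqrt (Real.exp 1)) with hKdef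
  set H : ℝ := c / α + K with hHdef
  have hK : 0 < K := by rw [hKdef]; positivity
  have hH : 0 ≤ H := by rw [hHdef, hKdef]; positivity
  have hNne : (N : ℝ) ≠ 0 := Nat.cast_ne_zero.2 hN.ne'
  -- kernel value bounds
  have hk0 : ∀ u v, 0 ≤ k u v := fun u v => by rw [hk]; exact (Real.exp_pos _).le
  have hk1 : ∀ u v, k u v ≤ 1 := by
    intro u v
    rw [hk]
    apply Real.exp_le_one_iff.2
    apply div_nonpos_of_nonpos_of_nonneg
    · simp [sq_nonneg]
    · positivity
  -- gradient of the kernel bound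
  have hgradk : ∀ v w, ‖gradient (fun u => k u v) w‖ ≤ K := by
    intro v w
    have hfe : (fun u => k u v) = fun u => Real.exp (-‖u - v‖ ^ 2 / (2 * σ ^ 2)) :=
      funext fun u => hk u v
    rw [hfe]
    exact vgf_gradnorm d σ hσ v w
  -- velocity bound
  have hvel : ∀ l i, ‖a (l + 1) i - a l i‖ ≤ ε * H := by
    intro l i
    rw [hstep l i, add_sub_cancel_left, norm_smul, norm_smul]
    have hterm : ∀ j : Fin N,
        ‖(k (a l j) (a l i) / α) • gradient R (a l j)
          + gradient (fun u => k u (a l i)) (a l j)‖ ≤ H := by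
      intro j
      calc ‖(k (a l j) (a l i) / α) • gradient R (a l j)
            + gradient (fun u => k u (a l i)) (a l j)‖
          ≤ ‖(k (a l j) (a l i) / α) • gradient R (a l j)‖
            + ‖gradient (fun u => k u (a l i)) (a l j)‖ := norm_add_le _ _
        _ ≤ c / α + K := by
            apply add_le_add _ (hgradk (a l i) (a l j))
            rw [norm_smul, Real.norm_eq_abs,
              abs_of_nonneg (div_nonneg (hk0 _ _) hα.le)]
            calc k (a l j) (a l i) / α * ‖gradient R (a l j)‖
                ≤ (1 / α) * c := by
                  apply mul_le_mul _ (hRc _) (norm_nonneg _) (by positivity)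
                  exact div_le_div_of_nonneg_right (hk1 _ _) hα.le
              _ = c / α := by ring
        _ = H := hHdef.symm
    have hS : ‖∑ j, ((k (a l j) (a l i) / α) • gradient R (a l j)
        + gradient (fun u => k u (a l i)) (a l j))‖ ≤ N * H := by
      calc ‖∑ j, ((k (a l j) (a l i) / α) • gradient R (a l j)
            + gradient (fun u => k u (a l i)) (a l j))‖
          ≤ ∑ j : Fin N, ‖(k (a l j) (a l i) / α) • gradient R (a l j)
            + gradient (fun u => k u (a l i)) (a l j)‖ := norm_sum_le _ _
        _ ≤ ∑ _j : Fin N, H := Finset.sum_le_sum fun j _ => hterm j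
        _ = N * H := by simp [Finset.sum_const, Finset.card_univ, nsmul_eq_mul]
    rw [Real.norm_eq_abs, abs_of_pos hε, Real.norm_eq_abs,
      abs_of_nonneg (inv_nonneg.2 (Nat.cast_nonneg N))]
    calc ε * ((N : ℝ)⁻¹ * ‖∑ j, ((k (a l j) (a l i) / α) • gradient R (a l j)
          + gradient (fun u => k u (a l i)) (a l j))‖)
        ≤ ε * ((N : ℝ)⁻¹ * (N * H)) := by gcongr
      _ = ε * H := by field_simp
  -- displacement bound
  have hdisp : ∀ i (l : ℕ), ‖a l i - a 0 i‖ ≤ ε * H * l := by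
    intro i l
    induction l with
    | zero => simp
    | succ n ih =>
      have h := norm_add_le (a (n + 1) i - a n i) (a n i - a 0 i)
      rw [sub_add_sub_cancel] at h
      calc ‖a (n + 1) i - a 0 i‖ ≤ ‖a (n + 1) i - a n i‖ + ‖a n i - a 0 i‖ := h
        _ ≤ ε * H + ε * H * n := add_le_add (hvel n i) ih
        _ = ε * H * ((n : ℝ) + 1) := by ring
        _ = ε * H * ((n + 1 : ℕ) : ℝ) := by push_cast; ring
  -- kernel Lipschitz in first argument
  have hlip : ∀ u u' v, |k u v - k u' v| ≤ K * ‖u - u'‖ := by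
    intro u u' v
    rw [hk, hk]
    refine (vgf_glip σ hσ ‖u - v‖ ‖u' - v‖).trans ?_
    have h1 : |‖u - v‖ - ‖u' - v‖| ≤ ‖u - u'‖ := by
      have := abs_norm_sub_norm_le (u - v) (u' - v)
      rwa [sub_sub_sub_cancel_right] at this
    exact mul_le_mul_of_nonneg_left h1 hK.le
  -- per-pair bound
  have hpair : ∀ i j, k (a 0 i) (a 0 j) + k (a L i) (a L j)
      - k (a L i) (a 0 j) - k (a 0 i) (a L j) ≤ 2 * K * (ε * H * L) := by
    intro i j
    have h1 : k (a 0 i) (a 0 j) - k (a L i) (a 0 j) ≤ K * (ε * H * L) := by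
      calc k (a 0 i) (a 0 j) - k (a L i) (a 0 j)
          ≤ |k (a 0 i) (a 0 j) - k (a L i) (a 0 j)| := le_abs_self _
        _ ≤ K * ‖a 0 i - a L i‖ := hlip _ _ _
        _ ≤ K * (ε * H * L) := by
            rw [norm_sub_rev]
            exact mul_le_mul_of_nonneg_left (hdisp i L) hK.le
    have h2 : k (a L i) (a L j) - k (a 0 i) (a L j) ≤ K * (ε * H * L) := by
      calc k (a L i) (a L j) - k (a 0 i) (a L j)
          ≤ |k (a L i) (a L j) - k (a 0 i) (a L j)| := le_abs_self _
        _ ≤ K * ‖a L i - a 0 i‖ := hlip _ _ _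
        _ ≤ K * (ε * H * L) := mul_le_mul_of_nonneg_left (hdisp i L) hK.le
    linarith
  -- combine
  have hsum : ∑ i, ∑ j, (k (a 0 i) (a 0 j) + k (a L i) (a L j)
      - k (a L i) (a 0 j) - k (a 0 i) (a L j)) ≤ (N : ℝ) ^ 2 * (2 * K * (ε * H * L)) := by
    calc ∑ i, ∑ j, (k (a 0 i) (a 0 j) + k (a L i) (a L j)
          - k (a L i) (a 0 j) - k (a 0 i) (a L j))
        ≤ ∑ _i : Fin N, ∑ _j : Fin N, 2 * K * (ε * H * L) :=
          Finset.sum_le_sum fun i _ => Finset.sum_le_sum fun j _ => hpair i j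
      _ = (N : ℝ) ^ 2 * (2 * K * (ε * H * L)) := by
          simp [Finset.sum_const, Finset.card_univ, nsmul_eq_mul]
          ring
  calc (1 / (N : ℝ) ^ 2) * ∑ i, ∑ j, (k (a 0 i) (a 0 j) + k (a L i) (a L j)
        - k (a L i) (a 0 j) - k (a 0 i) (a L j))
      ≤ (1 / (N : ℝ) ^ 2) * ((N : ℝ) ^ 2 * (2 * K * (ε * H * L))) := by
        apply mul_le_mul_of_nonneg_left hsum (by positivity)
    _ = 2 * K * (ε * H * L) := by field_simp
    _ = (2 * ε * L / (σ * Real.sqrt (Real.exp 1)))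
          * (c / α + 1 / (σ * Real.sqrt (Real.exp 1))) := by
        rw [hHdef, hKdef]; ring
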